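/- If M₁, M₂, M₃, M₄ are real positive definite symplectic matrices of order 2n with ¼(M₁ + M₂ + M₃ + M₄) = I, then M₁ = M₂ = M₃ = M₄ = I. -/

import Mathlib

open Matrix
open scoped ComplexOrder

noncomputable section

/-- The standard symplectic form matrix J = [[0, -I],[I, 0]] of order 2n. -/
def sympJ (n : ℕ) : Matrix (Fin n ⊕ Fin n) (Fin n ⊕ Fin n) ℝ :=
  Matrix.fromBlocks 0 (-1) 1 0

/-- A real 2n×2n matrix L is symplectic if Lᵀ J L = J. -/
def IsSymplectic {n : ℕ} (L : Matrix (Fin n ⊕ Fin n) (Fin n ⊕ Fin n) ℝ) : Prop :=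
  Lᵀ * sympJ n * L = sympJ n

/-- The convex set K_n of Gaussian covariance matrices:
real symmetric S of order 2n with 2S - iJ positive semidefinite (as a complex matrix). -/
def Kset (n : ℕ) : Set (Matrix (Fin n ⊕ Fin n) (Fin n ⊕ Fin n) ℝ) :=
  {S | S.IsSymm ∧
    ((2 : ℂ) • S.map (Complex.ofReal) - Complex.I • (sympJ n).map (Complex.ofReal)).PosSemidef}

lemma sympJ_mul_sympJ (n : ℕ) : sympJ n * sympJ n = -1 := by
  simp only [sympJ, Matrix.fromBlocks_multiply]
  ext (i|i) (j|j) <;> simp [Matrix.one_apply]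

/-- A PSD matrix whose negative is also PSD is zero. -/
lemma psd_neg_eq_zero {m : Type*} [Fintype m] [DecidableEq m]
    {P : Matrix m m ℝ} (hP : P.PosSemidef) (hP' : (-P).PosSemidef) : P = 0 := by
  have hv : ∀ x : m → ℝ, P *ᵥ x = 0 := by
    intro x
    rw [← hP.dotProduct_mulVec_zero_iff x]
    have h1 := hP.dotProduct_mulVec_nonneg x
    have h2 := hP'.dotProduct_mulVec_nonneg x
    rw [neg_mulVec, dotProduct_neg, le_neg, neg_zero] at h2
    exact le_antisymm h2 h1
  ext i j
  have := congrFun (hv (Pi.single j 1)) i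
  rwa [mulVec_single_one, Pi.zero_apply] at this

theorem posDef_symplectic_average_eq_one (n : ℕ)
    (M₁ M₂ M₃ M₄ : Matrix (Fin n ⊕ Fin n) (Fin n ⊕ Fin n) ℝ)
    (h₁ : M₁.PosDef) (h₂ : M₂.PosDef) (h₃ : M₃.PosDef) (h₄ : M₄.PosDef)
    (hs₁ : IsSymplectic M₁) (hs₂ : IsSymplectic M₂)
    (hs₃ : IsSymplectic M₃) (hs₄ : IsSymplectic M₄)
    (h : (1 / 4 : ℝ) • (M₁ + M₂ + M₃ + M₄) = 1) :
    M₁ = 1 ∧ M₂ = 1 ∧ M₃ = 1 ∧ M₄ = 1 := by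
  set J := sympJ n with hJ
  have hJJ : J * J = -1 := sympJ_mul_sympJ n
  -- sum = 4 • 1
  have hsum : M₁ + M₂ + M₃ + M₄ = (4 : ℝ) • 1 := by
    have := congrArg (fun A => (4 : ℝ) • A) h
    simpa [smul_smul] using this
  -- for each M: inverse is -J*M*J and things
  have key : ∀ M : Matrix (Fin n ⊕ Fin n) (Fin n ⊕ Fin n) ℝ, M.PosDef → IsSymplectic M →
      (M * (-(J * M * J)) = 1 ∧ (-(J * M * J)) * M = 1 ∧
        ((M + (-(J * M * J))) - (2:ℝ) • 1).PosSemidef) := by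
    intro M hM hsM
    have hMsymm : Mᵀ = M := hM.1.eq
    have hMJM : M * J * M = J := by
      rw [IsSymplectic, hMsymm] at hsM; exact hsM
    have hr : M * (-(J * M * J)) = 1 := by
      have : M * (J * M * J) = (M * J * M) * J := by noncomm_ring
      rw [mul_neg, this, hMJM, hJJ]; simp
    have hl : (-(J * M * J)) * M = 1 := by
      have : (J * M * J) * M = J * (M * J * M) := by noncomm_ring
      rw [neg_mul, this, hMJM, hJJ]; simp
    -- N := -(J*M*J) = M⁻¹
    have hNinv : -(J * M * J) = M⁻¹ := inv_eq_left_inv hl ▸ rfl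
    have hinvPD : (M⁻¹).PosDef := hM.inv
    -- identity: (M-1) * M⁻¹ * (M-1) = M + M⁻¹ - 2•1
    have hid : (M - 1)ᴴ * M⁻¹ * (M - 1) = (M + (-(J * M * J))) - (2:ℝ) • 1 := by
      rw [hNinv]
      have hH : (M - 1)ᴴ = M - 1 := by
        rw [conjTranspose_sub, hM.1.eq]; simp
      rw [hH]
      have hMl : M⁻¹ * M = 1 := nonsing_inv_mul M (isUnit_iff_ne_zero.mpr hM.det_pos.ne') ▸ rfl
      have hMr : M * M⁻¹ = 1 := mul_nonsing_inv M (isUnit_iff_ne_zero.mpr hM.det_pos.ne') ▸ rfl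
      have : (M - 1) * M⁻¹ * (M - 1) = M * M⁻¹ * M - M * M⁻¹ - M⁻¹ * M + M⁻¹ := by
        noncomm_ring
      rw [this, hMr, hMl, one_mul]
      have : ((2:ℝ) • (1 : Matrix (Fin n ⊕ Fin n) (Fin n ⊕ Fin n) ℝ)) = 1 + 1 := by
        norm_num [two_smul]
      rw [this]; abel
    refine ⟨hr, hl, ?_⟩
    rw [← hid]
    exact hinvPD.posSemidef.conjTranspose_mul_mul_same _
  obtain ⟨hr₁, hl₁, hp₁⟩ := key M₁ h₁ hs₁
  obtain ⟨hr₂, hl₂, hp₂⟩ := key M₂ h₂ hs₂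
  obtain ⟨hr₃, hl₃, hp₃⟩ := key M₃ h₃ hs₃
  obtain ⟨hr₄, hl₄, hp₄⟩ := key M₄ h₄ hs₄
  -- sum of the four PSD matrices is 0
  set P₁ := (M₁ + (-(J * M₁ * J))) - (2:ℝ) • 1 with hP₁
  set P₂ := (M₂ + (-(J * M₂ * J))) - (2:ℝ) • 1 with hP₂
  set P₃ := (M₃ + (-(J * M₃ * J))) - (2:ℝ) • 1 with hP₃
  set P₄ := (M₄ + (-(J * M₄ * J))) - (2:ℝ) • 1 with hP₄
  have hsum0 : P₁ + P₂ + P₃ + P₄ = 0 := by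
    have hJsum : J * (M₁ + M₂ + M₃ + M₄) * J = -((4:ℝ) • 1) := by
      rw [hsum]
      rw [Matrix.mul_smul, Matrix.smul_mul, mul_one, hJJ]
      simp
    rw [hP₁, hP₂, hP₃, hP₄]
    have expand : (M₁ + (-(J * M₁ * J))) - (2:ℝ) • 1 + ((M₂ + (-(J * M₂ * J))) - (2:ℝ) • 1)
        + ((M₃ + (-(J * M₃ * J))) - (2:ℝ) • 1) + ((M₄ + (-(J * M₄ * J))) - (2:ℝ) • 1)
        = (M₁ + M₂ + M₃ + M₄) - (J * (M₁ + M₂ + M₃ + M₄) * J) - (8:ℝ) • 1 := by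
      have h8 : ((8:ℝ) • (1 : Matrix (Fin n ⊕ Fin n) (Fin n ⊕ Fin n) ℝ))
          = (2:ℝ) • 1 + (2:ℝ) • 1 + (2:ℝ) • 1 + (2:ℝ) • 1 := by
        rw [← add_smul, ← add_smul, ← add_smul]; norm_num
      rw [h8]
      noncomm_ring
    rw [expand, hJsum, hsum]
    rw [sub_neg_eq_add, ← add_smul]
    norm_num
  -- each Pᵢ = 0
  have z₁ : P₁ = 0 := psd_neg_eq_zero hp₁ (by
    have : -P₁ = P₂ + P₃ + P₄ := by
      rw [eq_comm, ← add_eq_zero_iff_eq_neg]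
      calc P₂ + P₃ + P₄ + P₁ = P₁ + P₂ + P₃ + P₄ := by abel
        _ = 0 := hsum0
    rw [this]; exact (hp₂.add hp₃).add hp₄)
  have z₂ : P₂ = 0 := psd_neg_eq_zero hp₂ (by
    have : -P₂ = P₁ + P₃ + P₄ := by
      rw [eq_comm, ← add_eq_zero_iff_eq_neg]
      calc P₁ + P₃ + P₄ + P₂ = P₁ + P₂ + P₃ + P₄ := by abel
        _ = 0 := hsum0
    rw [this]; exact (hp₁.add hp₃).add hp₄)
  have z₃ : P₃ = 0 := psd_neg_eq_zero hp₃ (by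
    have : -P₃ = P₁ + P₂ + P₄ := by
      rw [eq_comm, ← add_eq_zero_iff_eq_neg]
      calc P₁ + P₂ + P₄ + P₃ = P₁ + P₂ + P₃ + P₄ := by abel
        _ = 0 := hsum0
    rw [this]; exact (hp₁.add hp₂).add hp₄)
  have z₄ : P₄ = 0 := psd_neg_eq_zero hp₄ (by
    have : -P₄ = P₁ + P₂ + P₃ := by
      rw [eq_comm, ← add_eq_zero_iff_eq_neg]
      calc P₁ + P₂ + P₃ + P₄ = P₁ + P₂ + P₃ + P₄ := by abel
        _ = 0 := hsum0
    rw [this]; exact (hp₁.add hp₂).add hp₃)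
  -- from Pᵢ = 0 derive Mᵢ = 1
  have final : ∀ M : Matrix (Fin n ⊕ Fin n) (Fin n ⊕ Fin n) ℝ, M.PosDef →
      M * (-(J * M * J)) = 1 → (-(J * M * J)) * M = 1 →
      (M + (-(J * M * J))) - (2:ℝ) • 1 = 0 → M = 1 := by
    intro M hM hr hl hz
    set N := -(J * M * J) with hN
    -- M + N = 2•1, so M*(M+N) = 2M, M² + 1 = 2M, (M-1)ᵀ(M-1) = M² - 2M + 1 = 0
    have hMN : M + N = (2:ℝ) • 1 := by
      have := hz; rwa [sub_eq_zero] at this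
    have hsq : (M - 1) * (M - 1) = 0 := by
      have e1 : M * (M + N) = M * M + 1 := by rw [mul_add, hr]
      rw [hMN] at e1
      have e2 : M * ((2:ℝ) • (1 : Matrix (Fin n ⊕ Fin n) (Fin n ⊕ Fin n) ℝ))
          = (2:ℝ) • M := by rw [Matrix.mul_smul, mul_one]
      rw [e2] at e1
      have : (M - 1) * (M - 1) = M * M + 1 - (2:ℝ) • M := by
        have h2 : ((2:ℝ) • M) = M + M := two_smul ℝ M
        rw [h2]; noncomm_ring
      rw [this, ← e1]; simp
    have hH : (M - 1)ᴴ = M - 1 := by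
      rw [conjTranspose_sub, hM.1.eq]; simp
    have : (M - 1)ᴴ * (M - 1) = 0 := by rw [hH, hsq]
    have := Matrix.conjTranspose_mul_self_eq_zero.mp this
    rwa [sub_eq_zero] at this
  exact ⟨final M₁ h₁ hr₁ hl₁ z₁, final M₂ h₂ hr₂ hl₂ z₂,
    final M₃ h₃ hr₃ hl₃ z₃, final M₄ h₄ hr₄ hl₄ z₄⟩
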